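/- arXiv:1410.0333 — 3 statements merged into one kernel-verified Lean document; each statement's English description precedes it below -/
import Mathlib

section
/- Let N ≥ 1, let A, B : Fin N → EuclideanSpace ℝ (Fin d), and let μ = (1/N) ∑_{i} δ_{A_i} and ν = (1/N) ∑_{j} δ_{B_j} be the associated empirical probability measures on EuclideanSpace ℝ (Fin d). Then the infimum, over all probability measures π on the product space EuclideanSpace ℝ (Fin d) × EuclideanSpace ℝ (Fin d) whose first marginal is μ and whose second marginal is ν, of ∫ ‖x − y‖² dπ(x,y), equals the minimum over all permutations σ of Fin N of (1/N) ∑_i ‖A_i − B_{σ_i}‖². That is, the squared quadratic Monge–Kantorovich distance between two empirical measures with the same number of atoms is computed by an optimal assignment (a permutation coupling). -/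
open MeasureTheory
open scoped ENNReal

section MK2Aux

variable {d N : ℕ}

local notation "E" => EuclideanSpace ℝ (Fin d)

private lemma MK2aux_emp_apply (A : Fin N → E) (s : Set E) :
    ((N : ℝ≥0∞)⁻¹ • ∑ i, Measure.dirac (A i)) s
      = (N : ℝ≥0∞)⁻¹ * ∑ i, s.indicator 1 (A i) := by
  simp [Measure.finset_sum_apply, Measure.dirac_apply]

private lemma MK2aux_prob (hN : 1 ≤ N) (P : Fin N → E × E) :
    IsProbabilityMeasure ((N : ℝ≥0∞)⁻¹ • ∑ i, Measure.dirac (P i)) := by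
  constructor
  simp only [Measure.smul_apply, Measure.finset_sum_apply, Measure.dirac_apply,
    Set.indicator_univ, Pi.one_apply, Finset.sum_const, Finset.card_univ, Fintype.card_fin,
    nsmul_eq_mul, mul_one, smul_eq_mul]
  rw [ENNReal.inv_mul_cancel] <;> simp; omega

private lemma MK2aux_fst (P : Fin N → E × E) :
    ((N : ℝ≥0∞)⁻¹ • ∑ i, Measure.dirac (P i)).fst
      = (N : ℝ≥0∞)⁻¹ • ∑ i, Measure.dirac ((P i).1) := by
  ext s hs
  rw [Measure.fst_apply hs]
  simp only [Measure.smul_apply, Measure.finset_sum_apply, smul_eq_mul,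
    Measure.dirac_apply' _ hs, Measure.dirac_apply' _ (measurable_fst hs)]
  congr 1

private lemma MK2aux_snd (P : Fin N → E × E) :
    ((N : ℝ≥0∞)⁻¹ • ∑ i, Measure.dirac (P i)).snd
      = (N : ℝ≥0∞)⁻¹ • ∑ i, Measure.dirac ((P i).2) := by
  ext s hs
  rw [Measure.snd_apply hs]
  simp only [Measure.smul_apply, Measure.finset_sum_apply, smul_eq_mul,
    Measure.dirac_apply' _ hs, Measure.dirac_apply' _ (measurable_snd hs)]
  congr 1

private lemma MK2aux_integral (P : Fin N → E × E) (f : E × E → ℝ) (hf : Continuous f) :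
    ∫ p, f p ∂((N : ℝ≥0∞)⁻¹ • ∑ i, Measure.dirac (P i)) = (1 / N : ℝ) * ∑ i, f (P i) := by
  rw [integral_smul_measure, integral_finset_sum_measure (fun i _ => ?_)]
  · simp [integral_dirac, ENNReal.toReal_inv, smul_eq_mul, div_eq_mul_inv, mul_comm]
  · refine ⟨hf.aestronglyMeasurable, ?_⟩
    rw [HasFiniteIntegral, lintegral_dirac]
    exact ENNReal.coe_lt_top

set_option maxHeartbeats 1000000 in
private lemma MK2aux_lower (hN : 1 ≤ N) (A B : Fin N → E)
    (π : Measure (E × E)) (hπ : IsProbabilityMeasure π)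
    (h1 : π.fst = (N : ℝ≥0∞)⁻¹ • ∑ i, Measure.dirac (A i))
    (h2 : π.snd = (N : ℝ≥0∞)⁻¹ • ∑ j, Measure.dirac (B j))
    (mval : ℝ)
    (hm : ∀ σ : Equiv.Perm (Fin N), mval ≤ (1 / N : ℝ) * ∑ i, ‖A i - B (σ i)‖ ^ 2) :
    mval ≤ ∫ p, ‖p.1 - p.2‖ ^ 2 ∂π := by
  classical
  have hN0 : (N : ℝ) ≠ 0 := Nat.cast_ne_zero.2 (by omega)
  set c : E → E → ℝ := fun x y => ‖x - y‖ ^ 2 with hc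
  set S : Finset E := Finset.univ.image A with hS
  set T : Finset E := Finset.univ.image B with hT
  have hSm : MeasurableSet (↑S : Set E) := S.finite_toSet.measurableSet
  have hTm : MeasurableSet (↑T : Set E) := T.finite_toSet.measurableSet
  -- the coupling is concentrated on S ×ˢ T
  have hfst0 : π (Prod.fst ⁻¹' (↑S : Set E)ᶜ) = 0 := by
    rw [← Measure.fst_apply hSm.compl, h1, MK2aux_emp_apply]
    have h0 : ∀ i, ((↑S : Set E)ᶜ).indicator (1 : E → ℝ≥0∞) (A i) = 0 := fun i =>
      Set.indicator_of_notMem (by simp [hS]) _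
    simp [h0]
  have hsnd0 : π (Prod.snd ⁻¹' (↑T : Set E)ᶜ) = 0 := by
    rw [← Measure.snd_apply hTm.compl, h2, MK2aux_emp_apply]
    have h0 : ∀ j, ((↑T : Set E)ᶜ).indicator (1 : E → ℝ≥0∞) (B j) = 0 := fun j =>
      Set.indicator_of_notMem (by simp [hT]) _
    simp [h0]
  -- row and column sums of the atom masses
  have hrow : ∀ x : E, π (Prod.fst ⁻¹' {x}) = ∑ y ∈ T, π {(x, y)} := by
    intro x
    have hU : π (⋃ y ∈ T, ({((x : E), y)} : Set (E × E))) = ∑ y ∈ T, π {(x, y)} :=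
      measure_biUnion_finset
        (fun y1 _ y2 _ hne => by simp [Set.disjoint_singleton, Prod.ext_iff, hne])
        (fun y _ => MeasurableSet.singleton _)
    rw [← hU]
    refine le_antisymm ?_ (measure_mono ?_)
    · calc π (Prod.fst ⁻¹' {x})
          ≤ π ((⋃ y ∈ T, ({((x : E), y)} : Set (E × E))) ∪ Prod.snd ⁻¹' (↑T : Set E)ᶜ) := by
            refine measure_mono ?_
            rintro ⟨a, b⟩ ha
            simp only [Set.mem_preimage, Set.mem_singleton_iff] at ha
            by_cases hb : b ∈ T
            · exact Or.inl (by simp [Set.mem_iUnion, ha, hb])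
            · exact Or.inr (by simpa using hb)
        _ ≤ π (⋃ y ∈ T, ({((x : E), y)} : Set (E × E))) + π (Prod.snd ⁻¹' (↑T : Set E)ᶜ) :=
            measure_union_le _ _
        _ = π (⋃ y ∈ T, ({((x : E), y)} : Set (E × E))) := by rw [hsnd0, add_zero]
    · intro p hp
      simp only [Set.mem_iUnion, Set.mem_singleton_iff] at hp
      obtain ⟨y, -, rfl⟩ := hp
      simp
  have hcol : ∀ y : E, π (Prod.snd ⁻¹' {y}) = ∑ x ∈ S, π {(x, y)} := by
    intro y
    have hU : π (⋃ x ∈ S, ({((x : E), y)} : Set (E × E))) = ∑ x ∈ S, π {(x, y)} :=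
      measure_biUnion_finset
        (fun x1 _ x2 _ hne => by simp [Set.disjoint_singleton, Prod.ext_iff, hne])
        (fun x _ => MeasurableSet.singleton _)
    rw [← hU]
    refine le_antisymm ?_ (measure_mono ?_)
    · calc π (Prod.snd ⁻¹' {y})
          ≤ π ((⋃ x ∈ S, ({((x : E), y)} : Set (E × E))) ∪ Prod.fst ⁻¹' (↑S : Set E)ᶜ) := by
            refine measure_mono ?_
            rintro ⟨a, b⟩ ha
            simp only [Set.mem_preimage, Set.mem_singleton_iff] at ha
            by_cases hb : a ∈ S
            · exact Or.inl (by simp [Set.mem_iUnion, ha, hb])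
            · exact Or.inr (by simpa using hb)
        _ ≤ π (⋃ x ∈ S, ({((x : E), y)} : Set (E × E))) + π (Prod.fst ⁻¹' (↑S : Set E)ᶜ) :=
            measure_union_le _ _
        _ = π (⋃ x ∈ S, ({((x : E), y)} : Set (E × E))) := by rw [hfst0, add_zero]
    · intro p hp
      simp only [Set.mem_iUnion, Set.mem_singleton_iff] at hp
      obtain ⟨x, -, rfl⟩ := hp
      simp
  -- multiplicities
  set nA : E → ℕ := fun x => (Finset.univ.filter fun i => A i = x).card with hnA
  set nB : E → ℕ := fun y => (Finset.univ.filter fun j => B j = y).card with hnB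
  have hfstx : ∀ x : E, π (Prod.fst ⁻¹' {x}) = (N : ℝ≥0∞)⁻¹ * nA x := by
    intro x
    rw [← Measure.fst_apply (MeasurableSet.singleton x), h1, MK2aux_emp_apply]
    congr 1
    simp only [Set.indicator_apply, Set.mem_singleton_iff, Pi.one_apply]
    rw [Finset.sum_boole, hnA]
  have hsndy : ∀ y : E, π (Prod.snd ⁻¹' {y}) = (N : ℝ≥0∞)⁻¹ * nB y := by
    intro y
    rw [← Measure.snd_apply (MeasurableSet.singleton y), h2, MK2aux_emp_apply]
    congr 1
    simp only [Set.indicator_apply, Set.mem_singleton_iff, Pi.one_apply]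
    rw [Finset.sum_boole, hnB]
  -- real-valued atom masses
  set m : E → E → ℝ := fun x y => (π {(x, y)}).toReal with hmdef
  have hm0 : ∀ x y, 0 ≤ m x y := fun x y => ENNReal.toReal_nonneg
  have htoR : ∀ (k : ℕ), ((N : ℝ≥0∞)⁻¹ * (k : ℝ≥0∞)).toReal = (k : ℝ) / N := by
    intro k
    rw [ENNReal.toReal_mul, ENNReal.toReal_inv]
    simp [div_eq_inv_mul]
  have hrowR : ∀ x, ∑ y ∈ T, m x y = (nA x : ℝ) / N := by
    intro x
    calc ∑ y ∈ T, m x y = (∑ y ∈ T, π {(x, y)}).toReal :=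
          (ENNReal.toReal_sum fun _ _ => measure_ne_top _ _).symm
      _ = (π (Prod.fst ⁻¹' {x})).toReal := by rw [hrow]
      _ = (nA x : ℝ) / N := by rw [hfstx]; exact htoR _
  have hcolR : ∀ y, ∑ x ∈ S, m x y = (nB y : ℝ) / N := by
    intro y
    calc ∑ x ∈ S, m x y = (∑ x ∈ S, π {(x, y)}).toReal :=
          (ENNReal.toReal_sum fun _ _ => measure_ne_top _ _).symm
      _ = (π (Prod.snd ⁻¹' {y})).toReal := by rw [hcol]
      _ = (nB y : ℝ) / N := by rw [hsndy]; exact htoR _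
  -- integral as a finite sum over atoms
  have hKnull : π ((↑(S ×ˢ T) : Set (E × E))ᶜ) = 0 := by
    have hsub : (↑(S ×ˢ T) : Set (E × E))ᶜ
        ⊆ Prod.fst ⁻¹' (↑S : Set E)ᶜ ∪ Prod.snd ⁻¹' (↑T : Set E)ᶜ := by
      rintro ⟨a, b⟩ hab
      simp only [Set.mem_compl_iff, Finset.coe_product, Set.mem_prod, Finset.mem_coe,
        not_and_or] at hab
      rcases hab with h | h
      · exact Or.inl (by simpa using h)
      · exact Or.inr (by simpa using h)
    refine le_antisymm ?_ zero_le
    calc π ((↑(S ×ˢ T) : Set (E × E))ᶜ)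
        ≤ π (Prod.fst ⁻¹' (↑S : Set E)ᶜ ∪ Prod.snd ⁻¹' (↑T : Set E)ᶜ) := measure_mono hsub
      _ ≤ π (Prod.fst ⁻¹' (↑S : Set E)ᶜ) + π (Prod.snd ⁻¹' (↑T : Set E)ᶜ) := measure_union_le _ _
      _ = 0 := by rw [hfst0, hsnd0, add_zero]
  have hint : ∫ p, ‖p.1 - p.2‖ ^ 2 ∂π = ∑ x ∈ S, ∑ y ∈ T, c x y * m x y := by
    have hres : π.restrict (↑(S ×ˢ T) : Set (E × E)) = π :=
      Measure.restrict_eq_self_of_ae_mem (ae_iff.2 hKnull)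
    have h1' : (∫ p, ‖p.1 - p.2‖ ^ 2 ∂π)
        = ∫ p in (↑(S ×ˢ T) : Set (E × E)), ‖p.1 - p.2‖ ^ 2 ∂π := by rw [hres]
    rw [h1', integral_finset (S ×ˢ T) _, Finset.sum_product]
    refine Finset.sum_congr rfl fun x _ => Finset.sum_congr rfl fun y _ => ?_
    rw [smul_eq_mul, mul_comm, Measure.real]
    exact IntegrableOn.finset
  -- fiber summation lemmas
  have hnA0 : ∀ i, (nA (A i) : ℝ) ≠ 0 := by
    intro i
    have : i ∈ Finset.univ.filter fun i' => A i' = A i := by simp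
    have hpos : 0 < nA (A i) := Finset.card_pos.2 ⟨i, this⟩
    exact_mod_cast hpos.ne'
  have hnB0 : ∀ j, (nB (B j) : ℝ) ≠ 0 := by
    intro j
    have : j ∈ Finset.univ.filter fun j' => B j' = B j := by simp
    have hpos : 0 < nB (B j) := Finset.card_pos.2 ⟨j, this⟩
    exact_mod_cast hpos.ne'
  have fiberA : ∀ g : E → ℝ, ∑ i, g (A i) / (nA (A i) : ℝ) = ∑ x ∈ S, g x := by
    intro g
    rw [Finset.sum_comp (fun x => g x / (nA x : ℝ)) A]
    refine Finset.sum_congr rfl fun x hx => ?_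
    obtain ⟨i, -, rfl⟩ := Finset.mem_image.1 hx
    rw [nsmul_eq_mul]
    have hcard : ((Finset.univ.filter fun a => A a = A i).card : ℝ) = (nA (A i) : ℝ) := by
      rw [hnA]
    rw [hcard, mul_div_cancel₀ _ (hnA0 i)]
  have fiberB : ∀ g : E → ℝ, ∑ j, g (B j) / (nB (B j) : ℝ) = ∑ y ∈ T, g y := by
    intro g
    rw [Finset.sum_comp (fun y => g y / (nB y : ℝ)) B]
    refine Finset.sum_congr rfl fun y hy => ?_
    obtain ⟨j, -, rfl⟩ := Finset.mem_image.1 hy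
    rw [nsmul_eq_mul]
    have hcard : ((Finset.univ.filter fun a => B a = B j).card : ℝ) = (nB (B j) : ℝ) := by
      rw [hnB]
    rw [hcard, mul_div_cancel₀ _ (hnB0 j)]
  -- the doubly stochastic matrix
  set M : Matrix (Fin N) (Fin N) ℝ :=
    fun i j => (N : ℝ) * m (A i) (B j) / (nA (A i) * nB (B j)) with hM
  have hMds : M ∈ doublyStochastic ℝ (Fin N) := by
    rw [mem_doublyStochastic_iff_sum]
    refine ⟨fun i j => ?_, fun i => ?_, fun j => ?_⟩
    · have := hm0 (A i) (B j)
      have hN' : (0:ℝ) ≤ N := Nat.cast_nonneg N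
      have : (0:ℝ) ≤ (N : ℝ) * m (A i) (B j) := by positivity
      exact div_nonneg this (by positivity)
    · have hterm : ∀ j, M i j = ((N : ℝ) * m (A i) (B j) / (nA (A i))) / (nB (B j)) := by
        intro j; rw [hM]; rw [div_div]
      calc ∑ j, M i j = ∑ j, ((fun y => (N : ℝ) * m (A i) y / (nA (A i))) (B j)) / (nB (B j)) := by
            exact Finset.sum_congr rfl fun j _ => hterm j
        _ = ∑ y ∈ T, (N : ℝ) * m (A i) y / (nA (A i)) :=
            fiberB (fun y => (N : ℝ) * m (A i) y / (nA (A i) : ℝ))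
        _ = (N : ℝ) / (nA (A i)) * ∑ y ∈ T, m (A i) y := by
            rw [Finset.mul_sum]
            exact Finset.sum_congr rfl fun y _ => by ring
        _ = 1 := by
            rw [hrowR]
            have := hnA0 i
            field_simp
    · have hterm : ∀ i, M i j = ((N : ℝ) * m (A i) (B j) / (nB (B j))) / (nA (A i)) := by
        intro i; rw [hM]; ring
      calc ∑ i, M i j = ∑ i, ((fun x => (N : ℝ) * m x (B j) / (nB (B j))) (A i)) / (nA (A i)) := by
            exact Finset.sum_congr rfl fun i _ => hterm i
        _ = ∑ x ∈ S, (N : ℝ) * m x (B j) / (nB (B j)) :=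
            fiberA (fun x => (N : ℝ) * m x (B j) / (nB (B j) : ℝ))
        _ = (N : ℝ) / (nB (B j)) * ∑ x ∈ S, m x (B j) := by
            rw [Finset.mul_sum]
            exact Finset.sum_congr rfl fun x _ => by ring
        _ = 1 := by
            rw [hcolR]
            have := hnB0 j
            field_simp
  -- the cost identity
  have hcost : ∑ i, ∑ j, c (A i) (B j) * M i j
      = (N : ℝ) * ∑ x ∈ S, ∑ y ∈ T, c x y * m x y := by
    have inner : ∀ i, ∑ j, c (A i) (B j) * M i j
        = ((∑ y ∈ T, (N : ℝ) * (c (A i) y * m (A i) y))) / (nA (A i)) := by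
      intro i
      calc ∑ j, c (A i) (B j) * M i j
          = ∑ j, ((fun y => (N : ℝ) * (c (A i) y * m (A i) y) / (nA (A i))) (B j)) / (nB (B j)) := by
            refine Finset.sum_congr rfl fun j _ => ?_
            rw [hM]; ring
        _ = ∑ y ∈ T, (N : ℝ) * (c (A i) y * m (A i) y) / (nA (A i)) :=
            fiberB (fun y => (N : ℝ) * (c (A i) y * m (A i) y) / (nA (A i) : ℝ))
        _ = ((∑ y ∈ T, (N : ℝ) * (c (A i) y * m (A i) y))) / (nA (A i)) := by
            rw [Finset.sum_div]
    calc ∑ i, ∑ j, c (A i) (B j) * M i j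
        = ∑ i, ((fun x => ∑ y ∈ T, (N : ℝ) * (c x y * m x y)) (A i)) / (nA (A i)) :=
          Finset.sum_congr rfl fun i _ => inner i
      _ = ∑ x ∈ S, ∑ y ∈ T, (N : ℝ) * (c x y * m x y) :=
          fiberA (fun x => ∑ y ∈ T, (N : ℝ) * (c x y * m x y))
      _ = (N : ℝ) * ∑ x ∈ S, ∑ y ∈ T, c x y * m x y := by
          rw [Finset.mul_sum]
          exact Finset.sum_congr rfl fun x _ => by rw [Finset.mul_sum]
  -- Birkhoff decomposition
  obtain ⟨w, hw0, hw1, hwM⟩ := exists_eq_sum_perm_of_mem_doublyStochastic hMds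
  have hMentry : ∀ i j, M i j = ∑ σ : Equiv.Perm (Fin N), w σ * (σ.permMatrix ℝ) i j := by
    intro i j
    rw [← hwM]
    simp only [Matrix.sum_apply, Matrix.smul_apply, smul_eq_mul]
  have hperm : ∀ σ : Equiv.Perm (Fin N),
      ∑ i, ∑ j, c (A i) (B j) * (σ.permMatrix ℝ) i j = ∑ i, c (A i) (B (σ i)) := by
    intro σ
    refine Finset.sum_congr rfl fun i _ => ?_
    have hpm : ∀ j, (σ.permMatrix ℝ) i j = if σ i = j then 1 else 0 := by
      intro j
      simp [Equiv.Perm.permMatrix, PEquiv.toMatrix_apply, Equiv.toPEquiv_apply, eq_comm]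
    simp only [hpm, mul_ite, mul_one, mul_zero]
    rw [Finset.sum_ite_eq]
    simp
  have hkey : ∑ i, ∑ j, c (A i) (B j) * M i j
      = ∑ σ : Equiv.Perm (Fin N), w σ * ∑ i, c (A i) (B (σ i)) := by
    calc ∑ i, ∑ j, c (A i) (B j) * M i j
        = ∑ i, ∑ j, ∑ σ : Equiv.Perm (Fin N), w σ * (c (A i) (B j) * (σ.permMatrix ℝ) i j) := by
          refine Finset.sum_congr rfl fun i _ => Finset.sum_congr rfl fun j _ => ?_
          rw [hMentry, Finset.mul_sum]
          exact Finset.sum_congr rfl fun σ _ => by ring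
      _ = ∑ i, ∑ σ : Equiv.Perm (Fin N), ∑ j, w σ * (c (A i) (B j) * (σ.permMatrix ℝ) i j) :=
          Finset.sum_congr rfl fun i _ => Finset.sum_comm
      _ = ∑ σ : Equiv.Perm (Fin N), ∑ i, ∑ j, w σ * (c (A i) (B j) * (σ.permMatrix ℝ) i j) :=
          Finset.sum_comm
      _ = ∑ σ : Equiv.Perm (Fin N), w σ * ∑ i, c (A i) (B (σ i)) := by
          refine Finset.sum_congr rfl fun σ _ => ?_
          rw [← hperm σ, Finset.mul_sum]
          exact Finset.sum_congr rfl fun i _ => by rw [Finset.mul_sum]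
  -- conclude
  have hNm : ∀ σ : Equiv.Perm (Fin N), (N : ℝ) * mval ≤ ∑ i, c (A i) (B (σ i)) := by
    intro σ
    have := hm σ
    have hNpos : (0:ℝ) < N := by positivity
    rw [div_mul_eq_mul_div, one_mul] at this
    calc (N : ℝ) * mval ≤ (N : ℝ) * ((∑ i, ‖A i - B (σ i)‖ ^ 2) / N) :=
          mul_le_mul_of_nonneg_left this (le_of_lt hNpos)
      _ = ∑ i, ‖A i - B (σ i)‖ ^ 2 := by field_simp
      _ = ∑ i, c (A i) (B (σ i)) := rfl
  have hfinal : (N : ℝ) * mval ≤ (N : ℝ) * ∫ p, ‖p.1 - p.2‖ ^ 2 ∂π := by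
    rw [hint, ← hcost, hkey]
    calc (N : ℝ) * mval = ∑ σ : Equiv.Perm (Fin N), w σ * ((N : ℝ) * mval) := by
          rw [← Finset.sum_mul, hw1, one_mul]
      _ ≤ ∑ σ : Equiv.Perm (Fin N), w σ * ∑ i, c (A i) (B (σ i)) :=
          Finset.sum_le_sum fun σ _ => mul_le_mul_of_nonneg_left (hNm σ) (hw0 σ)
  have hNpos : (0:ℝ) < N := by positivity
  exact le_of_mul_le_mul_left hfinal hNpos

end MK2Aux

/-- The squared quadratic Monge–Kantorovich distance between two empirical measures
with the same number of atoms equals the minimum over permutation couplings. -/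
theorem MK2_empirical_is_assignment (d N : ℕ) (hN : 1 ≤ N)
    (A B : Fin N → EuclideanSpace ℝ (Fin d)) :
    sInf {r : ℝ | ∃ π : Measure (EuclideanSpace ℝ (Fin d) × EuclideanSpace ℝ (Fin d)),
        IsProbabilityMeasure π ∧
        π.fst = (N : ℝ≥0∞)⁻¹ • ∑ i, Measure.dirac (A i) ∧
        π.snd = (N : ℝ≥0∞)⁻¹ • ∑ j, Measure.dirac (B j) ∧
        r = ∫ p, ‖p.1 - p.2‖ ^ 2 ∂π} =
      (Finset.univ : Finset (Equiv.Perm (Fin N))).inf' Finset.univ_nonempty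
        (fun σ => (1 / N : ℝ) * ∑ i, ‖A i - B (σ i)‖ ^ 2) := by
  classical
  set v : Equiv.Perm (Fin N) → ℝ := fun σ => (1 / N : ℝ) * ∑ i, ‖A i - B (σ i)‖ ^ 2 with hv
  set mval : ℝ := (Finset.univ : Finset (Equiv.Perm (Fin N))).inf' Finset.univ_nonempty v
    with hmval
  set Sset : Set ℝ := {r : ℝ | ∃ π : Measure (EuclideanSpace ℝ (Fin d) × EuclideanSpace ℝ (Fin d)),
        IsProbabilityMeasure π ∧
        π.fst = (N : ℝ≥0∞)⁻¹ • ∑ i, Measure.dirac (A i) ∧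
        π.snd = (N : ℝ≥0∞)⁻¹ • ∑ j, Measure.dirac (B j) ∧
        r = ∫ p, ‖p.1 - p.2‖ ^ 2 ∂π} with hSset
  have hcont : Continuous fun p : EuclideanSpace ℝ (Fin d) × EuclideanSpace ℝ (Fin d) =>
      ‖p.1 - p.2‖ ^ 2 := ((continuous_fst.sub continuous_snd).norm).pow 2
  -- each permutation value is attained
  have hmem : ∀ σ : Equiv.Perm (Fin N), v σ ∈ Sset := by
    intro σ
    refine ⟨(N : ℝ≥0∞)⁻¹ • ∑ i, Measure.dirac (A i, B (σ i)), MK2aux_prob hN _, ?_, ?_, ?_⟩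
    · rw [MK2aux_fst]
    · rw [MK2aux_snd]
      congr 1
      exact Equiv.sum_comp σ (fun j => Measure.dirac (B j))
    · rw [MK2aux_integral _ _ hcont]
  -- lower bound
  have hlb : ∀ r ∈ Sset, mval ≤ r := by
    rintro r ⟨π, hπ, h1, h2, rfl⟩
    exact MK2aux_lower hN A B π hπ h1 h2 mval
      (fun σ => Finset.inf'_le v (Finset.mem_univ σ))
  refine le_antisymm ?_ (le_csInf ⟨v 1, hmem 1⟩ hlb)
  obtain ⟨σ₀, -, hσ₀⟩ := Finset.exists_mem_eq_inf' (Finset.univ_nonempty) v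
  rw [hmval, hσ₀]
  exact csInf_le ⟨mval, hlb⟩ (hmem σ₀)
end

section
/- Let d ≥ 1, let Q be a symmetric d×d real matrix, and let M : ℝ → Matrix (Fin d) (Fin d) ℝ be differentiable with M(t) symmetric for all t and M'(t) = [[M(t), Q], M(t)] for all t. Then for every t, the function t ↦ trace(M(t)*Q) has derivative equal to −∑_{i,j} ([M(t),Q]_{ij})², i.e. d/dt trace(M(t)Q) = −‖[M(t),Q]‖²_F ≤ 0, where ‖·‖_F is the Frobenius norm. In particular t ↦ trace(M(t)Q) is nonincreasing, and it is strictly decreasing at any time where M(t) does not commute with Q. -/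
open Matrix

lemma brockett_key (d : ℕ) (Q Mt : Matrix (Fin d) (Fin d) ℝ)
    (hQ : Qᵀ = Q) (hMt : Mtᵀ = Mt) :
    (((Mt * Q - Q * Mt) * Mt - Mt * (Mt * Q - Q * Mt)) * Q).trace
      = -(∑ i, ∑ j, ((Mt * Q - Q * Mt) i j) ^ 2) := by
  set A := Mt * Q - Q * Mt with hA
  have hAT : Aᵀ = -A := by
    simp [hA, transpose_sub, transpose_mul, hQ, hMt, neg_sub]
  have h1 : ((A * Mt - Mt * A) * Q).trace = (A * A).trace := by
    rw [sub_mul, trace_sub, mul_assoc, ← Matrix.trace_mul_cycle A Q Mt,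
      mul_assoc, ← trace_sub, ← mul_sub, hA]
  rw [h1]
  have h2 : (A * A).trace = -(Aᵀ * A).trace := by
    rw [hAT]; simp
  rw [h2]
  rw [Matrix.trace]
  congr 1
  rw [Finset.sum_comm]
  refine Finset.sum_congr rfl fun i _ => ?_
  simp [Matrix.mul_apply, Matrix.diag, transpose_apply, sq]

/-- Along the Brockett flow `M' = [[M,Q],M]` with `M` and `Q` symmetric, the
function `t ↦ trace (M t * Q)` has derivative `-‖[M t, Q]‖²_F`; in particular
it is nonincreasing. -/
theorem brockett_trace_dissipation (d : ℕ) (hd : 1 ≤ d)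
    (Q : Matrix (Fin d) (Fin d) ℝ) (hQ : Qᵀ = Q)
    (M : ℝ → Matrix (Fin d) (Fin d) ℝ)
    (hsymm : ∀ t, (M t)ᵀ = M t)
    (hM : ∀ t, ∀ i j,
      HasDerivAt (fun s => M s i j)
        (((M t * Q - Q * M t) * M t - M t * (M t * Q - Q * M t)) i j) t) :
    (∀ t, HasDerivAt (fun s => (M s * Q).trace)
        (-(∑ i, ∑ j, ((M t * Q - Q * M t) i j) ^ 2)) t) ∧
    (∀ s t, s ≤ t → (M t * Q).trace ≤ (M s * Q).trace) := by
  have hderiv : ∀ t, HasDerivAt (fun s => (M s * Q).trace)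
      (-(∑ i, ∑ j, ((M t * Q - Q * M t) i j) ^ 2)) t := by
    intro t
    have h0 : HasDerivAt (fun s => (M s * Q).trace)
        ((((M t * Q - Q * M t) * M t - M t * (M t * Q - Q * M t)) * Q).trace) t := by
      have : ∀ s, (M s * Q).trace = ∑ i, ∑ j, M s i j * Q j i := by
        intro s; simp [Matrix.trace, Matrix.mul_apply, Matrix.diag]
      simp only [this]
      have : (((M t * Q - Q * M t) * M t - M t * (M t * Q - Q * M t)) * Q).trace
          = ∑ i, ∑ j, (((M t * Q - Q * M t) * M t - M t * (M t * Q - Q * M t)) i j) * Q j i := by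
        simp [Matrix.trace, Matrix.mul_apply, Matrix.diag]
      rw [this]
      exact HasDerivAt.fun_sum fun i _ => HasDerivAt.fun_sum fun j _ =>
        (hM t i j).mul_const _
    rwa [brockett_key d Q (M t) hQ (hsymm t)] at h0
  refine ⟨hderiv, fun s t hst => ?_⟩
  have hanti : Antitone (fun s => (M s * Q).trace) := by
    apply antitone_of_deriv_nonpos
    · intro x; exact (hderiv x).differentiableAt
    · intro x
      rw [(hderiv x).deriv]
      exact neg_nonpos.mpr (Finset.sum_nonneg fun i _ =>
        Finset.sum_nonneg fun j _ => sq_nonneg _)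
  exact hanti hst
end

section
/- Let d ≥ 1, let φ : EuclideanSpace ℝ (Fin d) → ℝ be twice continuously differentiable with compact support, and let v : EuclideanSpace ℝ (Fin d) → EuclideanSpace ℝ (Fin d) be continuously differentiable and divergence-free (∑_j ∂_j v_j = 0 pointwise). Then ∫ Δφ(x) · ( v(x) · ∇φ(x) ) dx = −∑_{i,j} ∫ ∂_i φ(x) ∂_j φ(x) ∂_i v_j(x) dx, where Δφ = ∑_i ∂_i ∂_i φ and v·∇φ = ∑_j v_j ∂_j φ. -/
open MeasureTheory

/-- The partial derivative of `f` in the `j`-th coordinate direction. -/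
noncomputable def pd {d : ℕ} (j : Fin d) (f : EuclideanSpace ℝ (Fin d) → ℝ)
    (x : EuclideanSpace ℝ (Fin d)) : ℝ :=
  fderiv ℝ f x (EuclideanSpace.single j 1)

section Aux
variable {d : ℕ}
local notation "E" => EuclideanSpace ℝ (Fin d)

lemma contDiff_pd_one {f : E → ℝ} (j : Fin d) (hf : ContDiff ℝ 2 f) :
    ContDiff ℝ 1 (pd j f) :=
  (hf.fderiv_right (by norm_num)).clm_apply contDiff_const

lemma continuous_pd {f : E → ℝ} (j : Fin d) (hf : ContDiff ℝ 1 f) :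
    Continuous (pd j f) :=
  (((hf.fderiv_right (le_refl _)).clm_apply contDiff_const) : ContDiff ℝ 0 (pd j f)).continuous

lemma hcs_pd {f : E → ℝ} (j : Fin d) (hf : HasCompactSupport f) :
    HasCompactSupport (pd j f) :=
  hf.fderiv_apply ℝ _

lemma integ_mul {h k : E → ℝ} (hh : Continuous h) (hk : Continuous k)
    (hkc : HasCompactSupport k) : Integrable (fun x => h x * k x) :=
  (hh.mul hk).integrable_of_hasCompactSupport hkc.mul_left

lemma ibp (i : Fin d) {f g : E → ℝ} (hf : Differentiable ℝ f) (hg : Differentiable ℝ g)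
    (h1 : Integrable (fun x => f x * pd i g x)) (h2 : Integrable (fun x => pd i f x * g x))
    (h3 : Integrable (fun x => f x * g x)) :
    ∫ x, f x * pd i g x = -∫ x, pd i f x * g x :=
  integral_mul_fderiv_eq_neg_fderiv_mul_of_integrable h2 h1 h3 (fun x _ => hf x) (fun x _ => hg x)

lemma pd_mul {f g : E → ℝ} (i : Fin d) {x : E} (hf : DifferentiableAt ℝ f x)
    (hg : DifferentiableAt ℝ g x) :
    pd i (fun y => f y * g y) x = f x * pd i g x + g x * pd i f x := by
  unfold pd
  rw [fderiv_fun_mul hf hg]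
  simp

lemma pd_symm {f : E → ℝ} (hf : ContDiff ℝ 2 f) (i j : Fin d) (x : E) :
    pd i (pd j f) x = pd j (pd i f) x := by
  have h1 : ContDiff ℝ 1 (fderiv ℝ f) := hf.fderiv_right (by norm_num)
  have h1x : DifferentiableAt ℝ (fderiv ℝ f) x := (h1.differentiable one_ne_zero).differentiableAt
  have key : ∀ a b : Fin d, pd a (pd b f) x =
      fderiv ℝ (fderiv ℝ f) x (EuclideanSpace.single a 1) (EuclideanSpace.single b 1) := by
    intro a b
    have hc : HasFDerivAt (fun y => fderiv ℝ f y (EuclideanSpace.single b 1))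
        ((ContinuousLinearMap.apply ℝ ℝ (EuclideanSpace.single b (1:ℝ))).comp
          (fderiv ℝ (fderiv ℝ f) x)) x :=
      (ContinuousLinearMap.apply ℝ ℝ (EuclideanSpace.single b (1:ℝ))).hasFDerivAt.comp x
        h1x.hasFDerivAt
    show fderiv ℝ (fun y => fderiv ℝ f y (EuclideanSpace.single b 1)) x
        (EuclideanSpace.single a 1) = _
    rw [hc.fderiv]
    rfl
  rw [key i j, key j i]
  exact (hf.contDiffAt.isSymmSndFDerivAt minSmoothness_of_isRCLikeNormedField.le).eq _ _

lemma contDiff_comp_proj {v : E → E} (hv : ContDiff ℝ 1 v) (j : Fin d) :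
    ContDiff ℝ 1 (fun y => v y j) :=
  (EuclideanSpace.proj j : E →L[ℝ] ℝ).contDiff.comp hv

end Aux

/-- Integration by parts: for `v` divergence-free,
`∫ Δφ (v·∇φ) = -∑_{i,j} ∫ ∂_i φ ∂_j φ ∂_i v_j`. -/
theorem laplacian_drift_by_parts (d : ℕ) (hd : 1 ≤ d)
    (φ : EuclideanSpace ℝ (Fin d) → ℝ)
    (hφ : ContDiff ℝ 2 φ) (hφc : HasCompactSupport φ)
    (v : EuclideanSpace ℝ (Fin d) → EuclideanSpace ℝ (Fin d))
    (hv : ContDiff ℝ 1 v)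
    (hdiv : ∀ x, ∑ j, pd j (fun y => v y j) x = 0) :
    (∫ x, (∑ i, pd i (pd i φ) x) * (∑ j, v x j * pd j φ x)) =
      -(∑ i, ∑ j, ∫ x, pd i φ x * pd j φ x * pd i (fun y => v y j) x) := by
  classical
  -- basic regularity facts
  have hP1 : ∀ i : Fin d, ContDiff ℝ 1 (pd i φ) := fun i => contDiff_pd_one i hφ
  have hPd : ∀ i : Fin d, Differentiable ℝ (pd i φ) := fun i => (hP1 i).differentiable one_ne_zero
  have hPcont : ∀ i : Fin d, Continuous (pd i φ) := fun i => (hPd i).continuous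
  have hPcs : ∀ i : Fin d, HasCompactSupport (pd i φ) := fun i => hcs_pd i hφc
  have hPP : ∀ i j : Fin d, Continuous (pd i (pd j φ)) := fun i j => continuous_pd i (hP1 j)
  have hPPcs : ∀ i j : Fin d, HasCompactSupport (pd i (pd j φ)) := fun i j => hcs_pd i (hPcs j)
  have hV1 : ∀ j : Fin d, ContDiff ℝ 1 (fun y => v y j) := fun j => contDiff_comp_proj hv j
  have hVd : ∀ j : Fin d, Differentiable ℝ (fun y => v y j) :=
    fun j => (hV1 j).differentiable one_ne_zero
  have hVcont : ∀ j : Fin d, Continuous (fun y => v y j) := fun j => (hVd j).continuous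
  have hVpd : ∀ i j : Fin d, Continuous (pd i (fun y => v y j)) :=
    fun i j => continuous_pd i (hV1 j)
  -- the three families of integrals
  set A : Fin d → Fin d → ℝ :=
    fun i j => ∫ x, pd i (pd i φ) x * (v x j * pd j φ x) with hA_def
  set B : Fin d → Fin d → ℝ :=
    fun i j => ∫ x, pd i φ x * pd j φ x * pd i (fun y => v y j) x with hB_def
  set T : Fin d → Fin d → ℝ :=
    fun i j => ∫ x, (v x j * pd i φ x) * pd j (pd i φ) x with hT_def
  -- Step 1: LHS = ∑ i, ∑ j, A i j
  have step1 : (∫ x, (∑ i, pd i (pd i φ) x) * (∑ j, v x j * pd j φ x))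
      = ∑ i, ∑ j, A i j := by
    have e1 : (fun x => (∑ i, pd i (pd i φ) x) * (∑ j, v x j * pd j φ x))
        = fun x => ∑ i, ∑ j, pd i (pd i φ) x * (v x j * pd j φ x) := by
      funext x
      rw [Finset.sum_mul_sum]
    rw [e1]
    rw [integral_finset_sum _ (fun i _ => integrable_finset_sum _ (fun j _ =>
      integ_mul (hPP i i) ((hVcont j).fun_mul (hPcont j)) (hPcs j).mul_left))]
    exact Finset.sum_congr rfl fun i _ => integral_finset_sum _ (fun j _ =>
      integ_mul (hPP i i) ((hVcont j).fun_mul (hPcont j)) (hPcs j).mul_left)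
  -- Step 2: A i j = -(T i j) - B i j
  have step2 : ∀ i j : Fin d, A i j = -(T i j) - B i j := by
    intro i j
    have hfd : Differentiable ℝ (fun x => v x j * pd j φ x) := (hVd j).mul (hPd j)
    have h1 : Integrable (fun x => (v x j * pd j φ x) * pd i (pd i φ) x) :=
      integ_mul ((hVcont j).mul (hPcont j)) (hPP i i) (hPPcs i i)
    have hpdmulcont : Continuous (pd i (fun y => v y j * pd j φ y)) :=
      continuous_pd i ((hV1 j).mul (hP1 j))
    have h2 : Integrable (fun x => pd i (fun y => v y j * pd j φ y) x * pd i φ x) :=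
      integ_mul hpdmulcont (hPcont i) (hPcs i)
    have h3 : Integrable (fun x => (v x j * pd j φ x) * pd i φ x) :=
      integ_mul ((hVcont j).mul (hPcont j)) (hPcont i) (hPcs i)
    have key : A i j = -∫ x, pd i (fun y => v y j * pd j φ y) x * pd i φ x := by
      rw [hA_def]
      simp only
      rw [show (fun x => pd i (pd i φ) x * (v x j * pd j φ x))
          = fun x => (v x j * pd j φ x) * pd i (pd i φ) x from funext fun x => by ring]
      exact ibp i hfd (hPd i) h1 h2 h3
    have expand : ∀ x, pd i (fun y => v y j * pd j φ y) x * pd i φ x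
        = (v x j * pd i φ x) * pd j (pd i φ) x
          + pd i φ x * pd j φ x * pd i (fun y => v y j) x := by
      intro x
      rw [pd_mul i ((hVd j) x) ((hPd j) x), pd_symm hφ i j x]
      ring
    rw [key, show (fun x => pd i (fun y => v y j * pd j φ y) x * pd i φ x)
        = fun x => (v x j * pd i φ x) * pd j (pd i φ) x
          + pd i φ x * pd j φ x * pd i (fun y => v y j) x from funext expand]
    rw [integral_add
      (integ_mul ((hVcont j).fun_mul (hPcont i)) (hPP j i) (hPPcs j i))
      (by
        have : Continuous fun x => pd i φ x * pd j φ x := (hPcont i).mul (hPcont j)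
        exact ((this.fun_mul (hVpd i j)).integrable_of_hasCompactSupport
          (((hPcs i).mul_right).mul_right)))]
    rw [neg_add]
    rfl
  -- Step 3: ∑ j, T i j = 0
  have step3 : ∀ i : Fin d, ∑ j, T i j = 0 := by
    intro i
    have hTval : ∀ j : Fin d, T i j
        = -(1/2) * ∫ x, pd j (fun y => v y j) x * (pd i φ x * pd i φ x) := by
      intro j
      have hfd : Differentiable ℝ (fun x => v x j * pd i φ x) := (hVd j).mul (hPd i)
      have h1 : Integrable (fun x => (v x j * pd i φ x) * pd j (pd i φ) x) :=
        integ_mul ((hVcont j).mul (hPcont i)) (hPP j i) (hPPcs j i)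
      have hpdmulcont : Continuous (pd j (fun y => v y j * pd i φ y)) :=
        continuous_pd j ((hV1 j).mul (hP1 i))
      have h2 : Integrable (fun x => pd j (fun y => v y j * pd i φ y) x * pd i φ x) :=
        integ_mul hpdmulcont (hPcont i) (hPcs i)
      have h3 : Integrable (fun x => (v x j * pd i φ x) * pd i φ x) :=
        integ_mul ((hVcont j).mul (hPcont i)) (hPcont i) (hPcs i)
      have key : T i j = -∫ x, pd j (fun y => v y j * pd i φ y) x * pd i φ x :=
        ibp j hfd (hPd i) h1 h2 h3
      have expand : ∀ x, pd j (fun y => v y j * pd i φ y) x * pd i φ x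
          = (v x j * pd i φ x) * pd j (pd i φ) x
            + pd j (fun y => v y j) x * (pd i φ x * pd i φ x) := by
        intro x
        rw [pd_mul j ((hVd j) x) ((hPd i) x)]
        ring
      have hsum : (∫ x, pd j (fun y => v y j * pd i φ y) x * pd i φ x)
          = T i j + ∫ x, pd j (fun y => v y j) x * (pd i φ x * pd i φ x) := by
        rw [show (fun x => pd j (fun y => v y j * pd i φ y) x * pd i φ x)
            = fun x => (v x j * pd i φ x) * pd j (pd i φ) x
              + pd j (fun y => v y j) x * (pd i φ x * pd i φ x) from funext expand]
        rw [integral_add h1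
          (integ_mul (hVpd j j) ((hPcont i).fun_mul (hPcont i)) ((hPcs i).mul_left))]
      have key2 : T i j = -(T i j + ∫ x, pd j (fun y => v y j) x * (pd i φ x * pd i φ x)) := by
        rw [← hsum]; exact key
      linarith [key2]
    rw [Finset.sum_congr rfl fun j _ => hTval j]
    rw [← Finset.mul_sum]
    rw [← integral_finset_sum _ (fun j _ =>
      integ_mul (hVpd j j) ((hPcont i).fun_mul (hPcont i)) ((hPcs i).mul_left))]
    have : ∀ x : EuclideanSpace ℝ (Fin d),
        (∑ j, pd j (fun y => v y j) x * (pd i φ x * pd i φ x)) = 0 := by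
      intro x
      rw [← Finset.sum_mul, hdiv x, zero_mul]
    simp only [this, integral_zero, mul_zero]
  -- assemble
  rw [step1]
  calc ∑ i, ∑ j, A i j = ∑ i : Fin d, ∑ j : Fin d, (-(T i j) - B i j) :=
        Finset.sum_congr rfl fun i _ => Finset.sum_congr rfl fun j _ => step2 i j
    _ = -(∑ i, ∑ j, B i j) := by
        have hper : ∀ i : Fin d, (∑ j : Fin d, (-(T i j) - B i j)) = -(∑ j, B i j) := by
          intro i
          rw [Finset.sum_sub_distrib, Finset.sum_neg_distrib, step3 i, neg_zero, zero_sub]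
        rw [Finset.sum_congr rfl fun i _ => hper i, Finset.sum_neg_distrib]
end
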